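/- The map Z : ℝ³ → ℝ³ is locally Lipschitz: every point of ℝ³ has a neighbourhood on which Z is Lipschitz with respect to the Euclidean metric. -/

import Mathlib

/-- Explicit vector in ℝ³ (with the Euclidean norm). -/
def vec3 (a b c : ℝ) : EuclideanSpace ℝ (Fin 3) := WithLp.toLp 2 ![a, b, c]

/-- The 4-periodic sawtooth: h(t) = t on [-1,1], h(t) = 2 - t on [1,3]. -/
noncomputable def h (t : ℝ) : ℝ := 1 - |4 * Int.fract ((t + 1) / 4) - 2|

/-- The sign function ε(t) = (-1)^⌊(t+1)/2⌋. -/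
noncomputable def eps (t : ℝ) : ℝ := (-1 : ℝ) ^ ⌊(t + 1) / 2⌋

/-- The Zorich-type map Z : ℝ³ → ℝ³. -/
noncomputable def Z (x : EuclideanSpace ℝ (Fin 3)) : EuclideanSpace ℝ (Fin 3) :=
  Real.exp (x 2) •
    vec3 (h (x 0)) (h (x 1)) (eps (x 0) * eps (x 1) * (1 - max |h (x 0)| |h (x 1)|))

/-- Rotation by π about the vertical line {(u,v,t) : t ∈ ℝ}. -/
noncomputable def Rot (u v : ℝ) (x : EuclideanSpace ℝ (Fin 3)) : EuclideanSpace ℝ (Fin 3) :=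
  vec3 (2 * u - x 0) (2 * v - x 1) (x 2)

noncomputable def N (a b : ℝ) : ℝ := (|h (a+1) + h (b+1)| - |h (a+1) - h (b+1)|) / 2

lemma abs_sub_round_le (x : ℝ) (n : ℤ) : |x - round x| ≤ |x - n| := by
  rcases eq_or_ne n (round x) with rfl | hn
  · exact le_refl _
  · have h0 : (1:ℤ) ≤ |round x - n| := Int.one_le_abs (sub_ne_zero.mpr (Ne.symm hn))
    have h1 : (1:ℝ) ≤ |(round x:ℝ) - n| := by exact_mod_cast h0
    have h2 := abs_sub_round x
    have h3 : |(round x:ℝ) - n| ≤ |x - round x| + |x - n| := by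
      calc |(round x:ℝ) - n| = |-(x - round x) + (x - n)| := by ring_nf
        _ ≤ |-(x - round x)| + |x - n| := abs_add_le _ _
        _ = |x - round x| + |x - n| := by rw [abs_neg]
    linarith

lemma h_eq_round (t : ℝ) : h t = 4 * |(t+1)/4 - round ((t+1)/4)| - 1 := by
  set w := (t+1)/4 with hw
  have hfr : Int.fract w = w - ⌊w⌋ := rfl
  have hfr0 := Int.fract_nonneg w
  have hlt := Int.fract_lt_one w
  rcases lt_or_ge (Int.fract w) (1/2) with hc | hc
  · have hr : round w = ⌊w⌋ := by
      rw [round_eq]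
      apply Int.floor_eq_iff.mpr
      refine ⟨by push_cast; rw [hfr] at hfr0; linarith, by push_cast; rw [hfr] at hc; linarith⟩
    have e1 : |4 * Int.fract w - 2| = -(4 * Int.fract w - 2) := abs_of_nonpos (by linarith)
    have e2 : |w - (⌊w⌋:ℝ)| = Int.fract w := by
      rw [← hfr]; exact abs_of_nonneg hfr0
    rw [h, hr, e1]
    push_cast
    rw [e2]
    ring
  · have hr : round w = ⌊w⌋ + 1 := by
      rw [round_eq]
      apply Int.floor_eq_iff.mpr
      refine ⟨by push_cast; rw [hfr] at hc; linarith, by push_cast; rw [hfr] at hlt; linarith⟩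
    have e1 : |4 * Int.fract w - 2| = 4 * Int.fract w - 2 := abs_of_nonneg (by linarith)
    have e2 : |w - ((⌊w⌋:ℝ) + 1)| = 1 - Int.fract w := by
      rw [abs_of_nonpos (by rw [hfr] at hlt; linarith), hfr]; ring
    rw [h, hr, e1]
    push_cast
    rw [e2]
    ring

lemma h_lip (a b : ℝ) : |h a - h b| ≤ |a - b| := by
  set wa := (a+1)/4 with hwa
  set wb := (b+1)/4 with hwb
  have L1 : |wa - round wa| ≤ |wa - wb| + |wb - round wb| := by
    calc |wa - round wa| ≤ |wa - round wb| := abs_sub_round_le wa (round wb)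
      _ = |(wa - wb) + (wb - round wb)| := by ring_nf
      _ ≤ _ := abs_add_le _ _
  have L2 : |wb - round wb| ≤ |wa - wb| + |wa - round wa| := by
    calc |wb - round wb| ≤ |wb - round wa| := abs_sub_round_le wb (round wa)
      _ = |(wb - wa) + (wa - round wa)| := by ring_nf
      _ ≤ |wb - wa| + |wa - round wa| := abs_add_le _ _
      _ = _ := by rw [abs_sub_comm]
  have hab : |wa - wb| = |a - b| / 4 := by
    rw [hwa, hwb, show (a+1)/4 - (b+1)/4 = (a-b)/4 by ring, abs_div]
    norm_num
  rw [h_eq_round, h_eq_round, abs_le]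
  have m1 := abs_le.mp L1
  have m2 := abs_le.mp L2
  have n1 := abs_nonneg (wa - round wa)
  have n2 := abs_nonneg (wb - round wb)
  rw [hab] at m1 m2
  constructor <;> [linarith; linarith]

lemma h_mem (t : ℝ) : -1 ≤ h t ∧ h t ≤ 1 := by
  rw [h_eq_round]
  have h1 := abs_sub_round ((t+1)/4)
  have h2 := abs_nonneg ((t+1)/4 - round ((t+1)/4))
  constructor <;> linarith

lemma h_abs_le (t : ℝ) : |h t| ≤ 1 := abs_le.mpr (h_mem t)

lemma eps_val (t : ℝ) : eps t = 1 ∨ eps t = -1 := by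
  rcases Int.even_or_odd ⌊(t+1)/2⌋ with he | ho
  · left; exact he.neg_one_zpow
  · right; exact ho.neg_one_zpow

lemma h_shift (t : ℝ) : h (t + 1) = eps t * (1 - |h t|) := by
  set k := ⌊(t+1)/4⌋ with hk
  have hfl := Int.floor_le ((t+1)/4)
  have hfu := Int.lt_floor_add_one ((t+1)/4)
  rw [← hk] at hfl hfu
  set s := t + 1 - 4*k with hs
  have hs0 : 0 ≤ s := by rw [hs]; linarith
  have hs4 : s < 4 := by rw [hs]; linarith
  have hfr1 : Int.fract ((t+1)/4) = s/4 := by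
    have : Int.fract ((t+1)/4) = (t+1)/4 - k := rfl
    rw [this, hs]; ring
  have hht : h t = 1 - |s - 2| := by
    rw [h, hfr1, show 4*(s/4) - 2 = s - 2 by ring]
  have hepst : eps t = (-1:ℝ)^⌊s/2⌋ := by
    have he : (t+1)/2 = s/2 + ((2*k : ℤ):ℝ) := by push_cast; rw [hs]; ring
    rw [eps, he, Int.floor_add_intCast, zpow_add₀ (by norm_num : (-1:ℝ) ≠ 0)]
    have h2 : (-1:ℝ)^(2*k : ℤ) = 1 := by
      rw [zpow_mul]; norm_num
    rw [h2, mul_one]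
  rcases lt_or_ge s 3 with h3 | h3
  · have hfr2 : Int.fract ((t+1+1)/4) = (s+1)/4 := by
      have heq : (t+1+1)/4 = (k:ℝ) + (s+1)/4 := by rw [hs]; ring
      rw [heq, show ((k:ℝ) + (s+1)/4) = ((k:ℤ):ℝ) + (s+1)/4 from rfl, Int.fract_intCast_add,
        Int.fract_eq_self.mpr ⟨by linarith, by linarith⟩]
    rcases lt_or_ge s 2 with h2 | h2
    · have hf : ⌊s/2⌋ = 0 := Int.floor_eq_iff.mpr ⟨by norm_num; linarith, by norm_num; linarith⟩
      rw [h, hfr2, hht, hepst, hf, zpow_zero, one_mul,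
        show 4*((s+1)/4) - 2 = s - 1 by ring,
        abs_of_nonpos (by linarith : s - 2 ≤ 0),
        show (1:ℝ) - -(s-2) = s - 1 by ring]
    · have hf : ⌊s/2⌋ = 1 := Int.floor_eq_iff.mpr ⟨by norm_num; linarith, by norm_num; linarith⟩
      rw [h, hfr2, hht, hepst, hf, zpow_one,
        show 4*((s+1)/4) - 2 = s - 1 by ring,
        abs_of_nonneg (by linarith : (0:ℝ) ≤ s - 2),
        show (1:ℝ) - (s-2) = 3 - s by ring,
        abs_of_nonneg (by linarith : (0:ℝ) ≤ 3 - s),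
        abs_of_nonneg (by linarith : (0:ℝ) ≤ s - 1)]
      ring
  · have hfr2 : Int.fract ((t+1+1)/4) = (s-3)/4 := by
      have heq : (t+1+1)/4 = ((k+1:ℤ):ℝ) + (s-3)/4 := by push_cast; rw [hs]; ring
      rw [heq, Int.fract_intCast_add,
        Int.fract_eq_self.mpr ⟨by linarith, by linarith⟩]
    have hf : ⌊s/2⌋ = 1 := Int.floor_eq_iff.mpr ⟨by norm_num; linarith, by norm_num; linarith⟩
    rw [h, hfr2, hht, hepst, hf, zpow_one,
      show 4*((s-3)/4) - 2 = s - 5 by ring,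
      abs_of_nonpos (by linarith : s - 5 ≤ 0),
      abs_of_nonneg (by linarith : (0:ℝ) ≤ s - 2),
      show (1:ℝ) - (s-2) = 3 - s by ring,
      abs_of_nonpos (by linarith : (3:ℝ) - s ≤ 0)]
    ring

lemma quad (e f p q : ℝ) (he : e = 1 ∨ e = -1) (hf : f = 1 ∨ f = -1)
    (hp : 0 ≤ p) (hq : 0 ≤ q) :
    (|e*p + f*q| - |e*p - f*q|)/2 = e * f * min p q := by
  rcases abs_cases (e*p + f*q) with ⟨hA, hA'⟩ | ⟨hA, hA'⟩ <;>
  rcases abs_cases (e*p - f*q) with ⟨hB, hB'⟩ | ⟨hB, hB'⟩ <;>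
  rw [hA, hB] <;>
  rcases he with rfl | rfl <;> rcases hf with rfl | rfl <;>
  rcases le_total p q with hc | hc <;>
  (first | rw [min_eq_left hc] | rw [min_eq_right hc]) <;>
  linarith

lemma N_eq (a b : ℝ) : N a b = eps a * eps b * (1 - max |h a| |h b|) := by
  have pa : 0 ≤ 1 - |h a| := by linarith [h_abs_le a]
  have pb : 0 ≤ 1 - |h b| := by linarith [h_abs_le b]
  have hmax : 1 - max |h a| |h b| = min (1 - |h a|) (1 - |h b|) := by
    rcases le_total |h a| |h b| with hc | hc
    · rw [max_eq_right hc, min_eq_right (by linarith)]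
    · rw [max_eq_left hc, min_eq_left (by linarith)]
  rw [N, h_shift a, h_shift b, hmax]
  exact quad _ _ _ _ (eps_val a) (eps_val b) pa pb

lemma N_abs_le (a b : ℝ) : |N a b| ≤ 1 := by
  have t1 : abs (|h (a+1) + h (b+1)| - |h (a+1) - h (b+1)|) ≤ |2 * h (b+1)| :=
    (abs_abs_sub_abs_le_abs_sub _ _).trans (by rw [show h (a+1) + h (b+1) - (h (a+1) - h (b+1)) = 2 * h (b+1) by ring])
  have t2 : |2 * h (b+1)| ≤ 2 := by
    rw [abs_mul, abs_two]; linarith [h_abs_le (b+1)]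
  rw [N, abs_div, abs_two, div_le_one (by norm_num)]
  exact t1.trans t2

lemma N_lip (a b a' b' : ℝ) : |N a b - N a' b'| ≤ |a - a'| + |b - b'| := by
  have hu : |h (a+1) - h (a'+1)| ≤ |a - a'| := by
    have := h_lip (a+1) (a'+1)
    rwa [show a+1 - (a'+1) = a - a' by ring] at this
  have hv : |h (b+1) - h (b'+1)| ≤ |b - b'| := by
    have := h_lip (b+1) (b'+1)
    rwa [show b+1 - (b'+1) = b - b' by ring] at this
  have t1 : abs (|h (a+1) + h (b+1)| - |h (a'+1) + h (b'+1)|) ≤ |a - a'| + |b - b'| := by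
    calc _ ≤ |h (a+1) + h (b+1) - (h (a'+1) + h (b'+1))| := abs_abs_sub_abs_le_abs_sub _ _
      _ = |(h (a+1) - h (a'+1)) + (h (b+1) - h (b'+1))| := by ring_nf
      _ ≤ |h (a+1) - h (a'+1)| + |h (b+1) - h (b'+1)| := abs_add_le _ _
      _ ≤ _ := add_le_add hu hv
  have t2 : abs (|h (a+1) - h (b+1)| - |h (a'+1) - h (b'+1)|) ≤ |a - a'| + |b - b'| := by
    calc _ ≤ |h (a+1) - h (b+1) - (h (a'+1) - h (b'+1))| := abs_abs_sub_abs_le_abs_sub _ _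
      _ = |(h (a+1) - h (a'+1)) + -(h (b+1) - h (b'+1))| := by ring_nf
      _ ≤ |h (a+1) - h (a'+1)| + |-(h (b+1) - h (b'+1))| := abs_add_le _ _
      _ = |h (a+1) - h (a'+1)| + |h (b+1) - h (b'+1)| := by rw [abs_neg]
      _ ≤ _ := add_le_add hu hv
  have m1 := abs_le.mp t1
  have m2 := abs_le.mp t2
  rw [N, N, abs_le]
  constructor <;> [linarith; linarith]

lemma exp_lip {R a b : ℝ} (ha : a ≤ R) (hb : b ≤ R) :
    |Real.exp a - Real.exp b| ≤ Real.exp R * |a - b| := by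
  have key : ∀ p q : ℝ, q ≤ p → p ≤ R → Real.exp p - Real.exp q ≤ Real.exp R * (p - q) := by
    intro p q hpq hpR
    have h1 := Real.add_one_le_exp (q - p)
    have h2 : Real.exp (q - p) * Real.exp p = Real.exp q := by
      rw [← Real.exp_add]; ring_nf
    have h3 : Real.exp p ≤ Real.exp R := Real.exp_le_exp.mpr hpR
    nlinarith [Real.exp_pos p]
  rcases le_total b a with hc | hc
  · rw [abs_of_nonneg (by linarith [Real.exp_le_exp.mpr hc]), abs_of_nonneg (by linarith)]
    exact key a b hc ha
  · rw [abs_of_nonpos (by linarith [Real.exp_le_exp.mpr hc]), abs_of_nonpos (by linarith)]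
    have := key b a hc hb
    linarith

lemma dist_coord (y z : EuclideanSpace ℝ (Fin 3)) (i : Fin 3) : dist (y i) (z i) ≤ dist y z := by
  rw [EuclideanSpace.dist_eq]
  rw [show dist (y i) (z i) = Real.sqrt (dist (y i) (z i) ^ 2) from (Real.sqrt_sq dist_nonneg).symm]
  exact Real.sqrt_le_sqrt (Finset.single_le_sum (f := fun j => dist (y j) (z j) ^ 2)
    (fun j _ => sq_nonneg _) (Finset.mem_univ i))

lemma Z_apply_0 (y : EuclideanSpace ℝ (Fin 3)) : Z y 0 = Real.exp (y 2) * h (y 0) := by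
  simp [Z, vec3]
lemma Z_apply_1 (y : EuclideanSpace ℝ (Fin 3)) : Z y 1 = Real.exp (y 2) * h (y 1) := by
  simp [Z, vec3]
lemma Z_apply_2 (y : EuclideanSpace ℝ (Fin 3)) : Z y 2 = Real.exp (y 2) * N (y 0) (y 1) := by
  simp [Z, vec3, N_eq]

/-- The map Z : ℝ³ → ℝ³ is locally Lipschitz: every point of ℝ³ has a
    neighbourhood on which Z is Lipschitz (w.r.t. the Euclidean metric). -/
theorem zorich_locally_lipschitz :
    ∀ x : EuclideanSpace ℝ (Fin 3), ∃ K : NNReal, ∃ U ∈ nhds x, LipschitzOnWith K Z U := by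

  intro x
  set R : ℝ := x 2 + 1 with hR
  set C : ℝ := Real.exp R with hCdef
  have hC : 0 < C := Real.exp_pos _
  refine ⟨Real.toNNReal (Real.sqrt 3 * (3 * C)), Metric.ball x 1,
    Metric.ball_mem_nhds x one_pos, ?_⟩
  apply LipschitzOnWith.of_dist_le_mul
  intro y hy z hz
  have hy2 : y 2 ≤ R := by
    have h1 : |y 2 - x 2| ≤ dist y x := by rw [← Real.dist_eq]; exact dist_coord y x 2
    have h2 : dist y x < 1 := Metric.mem_ball.mp hy
    have := le_abs_self (y 2 - x 2)
    rw [hR]; linarith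
  have hz2 : z 2 ≤ R := by
    have h1 : |z 2 - x 2| ≤ dist z x := by rw [← Real.dist_eq]; exact dist_coord z x 2
    have h2 : dist z x < 1 := Metric.mem_ball.mp hz
    have := le_abs_self (z 2 - x 2)
    rw [hR]; linarith
  set d : ℝ := dist y z with hd
  have hd0 : 0 ≤ d := dist_nonneg
  have hc0 : |y 0 - z 0| ≤ d := by rw [← Real.dist_eq]; exact dist_coord y z 0
  have hc1 : |y 1 - z 1| ≤ d := by rw [← Real.dist_eq]; exact dist_coord y z 1
  have hc2 : |y 2 - z 2| ≤ d := by rw [← Real.dist_eq]; exact dist_coord y z 2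
  have hexp : |Real.exp (y 2) - Real.exp (z 2)| ≤ C * d :=
    (exp_lip hy2 hz2).trans (by { rw [hCdef]; exact mul_le_mul_of_nonneg_left hc2 hC.le })
  have hey : Real.exp (y 2) ≤ C := Real.exp_le_exp.mpr hy2
  have bound : ∀ gy gz L : ℝ, 0 ≤ L → |gy| ≤ 1 → |gz| ≤ 1 → |gy - gz| ≤ L * d →
      |Real.exp (y 2) * gy - Real.exp (z 2) * gz| ≤ (C * L + C) * d := by
    intro gy gz L hL0 hgy hgz hL
    have e1 : Real.exp (y 2) * gy - Real.exp (z 2) * gz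
        = Real.exp (y 2) * (gy - gz) + (Real.exp (y 2) - Real.exp (z 2)) * gz := by ring
    calc |Real.exp (y 2) * gy - Real.exp (z 2) * gz|
        ≤ |Real.exp (y 2) * (gy - gz)| + |(Real.exp (y 2) - Real.exp (z 2)) * gz| := by
          rw [e1]; exact abs_add_le _ _
      _ = Real.exp (y 2) * |gy - gz| + |Real.exp (y 2) - Real.exp (z 2)| * |gz| := by
          rw [abs_mul, abs_mul, abs_of_nonneg (Real.exp_pos _).le]
      _ ≤ C * (L * d) + (C * d) * 1 := by
          apply add_le_add
          · exact mul_le_mul hey hL (abs_nonneg _) hC.le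
          · exact mul_le_mul hexp hgz (abs_nonneg _) (by positivity)
      _ = (C * L + C) * d := by ring
  have b0 : |Z y 0 - Z z 0| ≤ (3 * C) * d := by
    rw [Z_apply_0, Z_apply_0]
    have := bound (h (y 0)) (h (z 0)) 1 one_pos.le (h_abs_le _) (h_abs_le _)
      (by rw [one_mul]; exact (h_lip _ _).trans hc0)
    nlinarith
  have b1 : |Z y 1 - Z z 1| ≤ (3 * C) * d := by
    rw [Z_apply_1, Z_apply_1]
    have := bound (h (y 1)) (h (z 1)) 1 one_pos.le (h_abs_le _) (h_abs_le _)
      (by rw [one_mul]; exact (h_lip _ _).trans hc1)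
    nlinarith
  have b2 : |Z y 2 - Z z 2| ≤ (3 * C) * d := by
    rw [Z_apply_2, Z_apply_2]
    have := bound (N (y 0) (y 1)) (N (z 0) (z 1)) 2 (by norm_num) (N_abs_le _ _) (N_abs_le _ _)
      ((N_lip _ _ _ _).trans (by linarith))
    nlinarith
  have hM0 : 0 ≤ 3 * C * d := by positivity
  have key : dist (Z y) (Z z) ≤ Real.sqrt 3 * (3 * C * d) := by
    rw [EuclideanSpace.dist_eq]
    have hsum : ∑ i : Fin 3, dist (Z y i) (Z z i) ^ 2 ≤ 3 * (3 * C * d) ^ 2 := by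
      rw [Fin.sum_univ_three]
      have e0 : dist (Z y 0) (Z z 0) ^ 2 ≤ (3 * C * d) ^ 2 := by
        rw [Real.dist_eq]; exact sq_le_sq' (by linarith [abs_le.mp b0, neg_abs_le (Z y 0 - Z z 0)]) (by linarith [abs_le.mp b0, le_abs_self (Z y 0 - Z z 0)])
      have e1 : dist (Z y 1) (Z z 1) ^ 2 ≤ (3 * C * d) ^ 2 := by
        rw [Real.dist_eq]; exact sq_le_sq' (by linarith [abs_le.mp b1, neg_abs_le (Z y 1 - Z z 1)]) (by linarith [abs_le.mp b1, le_abs_self (Z y 1 - Z z 1)])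
      have e2 : dist (Z y 2) (Z z 2) ^ 2 ≤ (3 * C * d) ^ 2 := by
        rw [Real.dist_eq]; exact sq_le_sq' (by linarith [abs_le.mp b2, neg_abs_le (Z y 2 - Z z 2)]) (by linarith [abs_le.mp b2, le_abs_self (Z y 2 - Z z 2)])
      linarith
    calc Real.sqrt (∑ i : Fin 3, dist (Z y i) (Z z i) ^ 2)
        ≤ Real.sqrt (3 * (3 * C * d) ^ 2) := Real.sqrt_le_sqrt hsum
      _ = Real.sqrt 3 * (3 * C * d) := by
          rw [Real.sqrt_mul (by norm_num), Real.sqrt_sq hM0]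
  have hKcoe : (Real.toNNReal (Real.sqrt 3 * (3 * C)) : ℝ) = Real.sqrt 3 * (3 * C) := by
    rw [Real.coe_toNNReal _ (by positivity)]
  rw [hKcoe]
  calc dist (Z y) (Z z) ≤ Real.sqrt 3 * (3 * C * d) := key
    _ = Real.sqrt 3 * (3 * C) * d := by ring
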